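/- Let D ⊆ ℝ × ℝⁿ be an open convex set, let s : D → ℝ be a convex function that is differentiable on D, and fix (t̄, v̄, x̄) ∈ ℝ × ℝ × ℝⁿ. Define h : D → ℝ by h(v, x) = (1/2)(s(v, x) − t̄)² + (1/2)(v − v̄)² + (1/2)‖x − x̄‖₂². Suppose (v*, x*) ∈ D is a stationary point of h (i.e., ∇h(v*, x*) = 0) with s(v*, x*) > t̄, and set t* = s(v*, x*). Then (t*, v*, x*) minimizes (1/2)(t − t̄)² + (1/2)(v − v̄)² + (1/2)‖x − x̄‖₂² over all (t, v, x) ∈ ℝ × D with s(v, x) ≤ t. -/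

import Mathlib

open Finset

set_option maxHeartbeats 600000 in
/-- Let `D ⊆ ℝ × ℝⁿ` be an open convex set, `s : D → ℝ` convex and
differentiable on `D`, and fix `(tb, vb, xb)`. Define
`h(v, x) = (1/2)(s(v,x) − tb)² + (1/2)(v − vb)² + (1/2)‖x − xb‖₂²`.
If `(v*, x*) ∈ D` is a stationary point of `h` with `s(v*, x*) > tb`, then
`(s(v*, x*), v*, x*)` minimizes
`(1/2)(t − tb)² + (1/2)(v − vb)² + (1/2)‖x − xb‖₂²`
over all `(t, v, x) ∈ ℝ × D` with `s(v, x) ≤ t`. -/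
theorem stmt18 {n : ℕ} (D : Set (ℝ × (Fin n → ℝ))) (hD : IsOpen D)
    (hDconv : Convex ℝ D)
    (s : ℝ × (Fin n → ℝ) → ℝ) (hs : ConvexOn ℝ D s)
    (hdiff : DifferentiableOn ℝ s D)
    (tb vb : ℝ) (xb : Fin n → ℝ)
    (p : ℝ × (Fin n → ℝ)) (hp : p ∈ D)
    (hstat : fderiv ℝ (fun q : ℝ × (Fin n → ℝ) =>
        (1 / 2) * (s q - tb) ^ 2 + (1 / 2) * (q.1 - vb) ^ 2 +
          (1 / 2) * ∑ i, (q.2 i - xb i) ^ 2) p = 0)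
    (hgt : s p > tb) :
    ∀ (t : ℝ) (q : ℝ × (Fin n → ℝ)), q ∈ D → s q ≤ t →
      (1 / 2) * (s p - tb) ^ 2 + (1 / 2) * (p.1 - vb) ^ 2 +
          (1 / 2) * ∑ i, (p.2 i - xb i) ^ 2 ≤
      (1 / 2) * (t - tb) ^ 2 + (1 / 2) * (q.1 - vb) ^ 2 +
          (1 / 2) * ∑ i, (q.2 i - xb i) ^ 2 := by
  intro t q hq hts
  have hdp : DifferentiableAt ℝ s p := hdiff.differentiableAt (hD.mem_nhds hp)
  set L := fderiv ℝ s p with hLdef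
  have hsp : HasFDerivAt s L p := hdp.hasFDerivAt
  -- gradient inequality
  have hgrad : L (q - p) ≤ s q - s p := by
    set ℓ : ℝ →ᵃ[ℝ] (ℝ × (Fin n → ℝ)) := AffineMap.lineMap p q with hℓ
    have hconv : ConvexOn ℝ (Set.Icc (0:ℝ) 1) (s ∘ ℓ) :=
      (hs.comp_affineMap ℓ).subset
        (fun τ hτ => hDconv.lineMap_mem hp hq hτ) (convex_Icc 0 1)
    have hderiv : HasDerivAt (s ∘ ℓ) (L (q - p)) 0 := by
      have h1 : HasDerivAt (fun τ : ℝ => ℓ τ) (q - p) 0 := by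
        simp only [hℓ, AffineMap.lineMap_apply]
        simpa using (((hasDerivAt_id (0:ℝ)).smul_const (q - p)).add_const p)
      have hsp0 : HasFDerivAt s L (ℓ 0) := by
        simpa [hℓ, AffineMap.lineMap_apply] using hsp
      have h2 := hsp0.comp_hasDerivAt 0 h1
      simpa using h2
    have := hconv.le_slope_of_hasDerivAt (by norm_num) (by norm_num) one_pos hderiv
    simpa [slope_def_field, hℓ, AffineMap.lineMap_apply] using this
  -- stationarity
  set Pr : Fin n → (ℝ × (Fin n → ℝ)) →L[ℝ] ℝ := fun i =>
    (ContinuousLinearMap.proj i).comp (ContinuousLinearMap.snd ℝ ℝ (Fin n → ℝ)) with hPr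
  have hfst : HasFDerivAt (fun r : ℝ × (Fin n → ℝ) => r.1)
      (ContinuousLinearMap.fst ℝ ℝ (Fin n → ℝ)) p := hasFDerivAt_fst
  have hPri : ∀ i, HasFDerivAt (fun r : ℝ × (Fin n → ℝ) => r.2 i) (Pr i) p :=
    fun i => (Pr i).hasFDerivAt
  have H1 : HasFDerivAt (fun r : ℝ × (Fin n → ℝ) => (1/2 : ℝ) * (s r - tb)^2)
      ((1/2 : ℝ) • ((s p - tb) • L + (s p - tb) • L)) p := by
    have := ((hsp.sub_const tb).mul (hsp.sub_const tb)).const_mul (1/2 : ℝ)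
    refine this.congr_of_eventuallyEq (Filter.Eventually.of_forall fun r => ?_)
    simp only [Pi.mul_apply]
    ring
  have H2 : HasFDerivAt (fun r : ℝ × (Fin n → ℝ) => (1/2 : ℝ) * (r.1 - vb)^2)
      ((1/2 : ℝ) • ((p.1 - vb) • ContinuousLinearMap.fst ℝ ℝ (Fin n → ℝ)
        + (p.1 - vb) • ContinuousLinearMap.fst ℝ ℝ (Fin n → ℝ))) p := by
    have := (((hfst.sub_const vb)).mul ((hfst.sub_const vb))).const_mul (1/2 : ℝ)
    refine this.congr_of_eventuallyEq (Filter.Eventually.of_forall fun r => ?_)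
    simp only [Pi.mul_apply]
    ring
  have H3 : HasFDerivAt (fun r : ℝ × (Fin n → ℝ) => (1/2 : ℝ) * ∑ i, (r.2 i - xb i)^2)
      ((1/2 : ℝ) • (∑ i, ((p.2 i - xb i) • Pr i + (p.2 i - xb i) • Pr i))) p := by
    have hsum : HasFDerivAt (fun r : ℝ × (Fin n → ℝ) => ∑ i, (r.2 i - xb i)^2)
        (∑ i, ((p.2 i - xb i) • Pr i + (p.2 i - xb i) • Pr i)) p := by
      apply HasFDerivAt.fun_sum
      intro i _
      have := (((hPri i).sub_const (xb i))).mul (((hPri i).sub_const (xb i)))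
      refine this.congr_of_eventuallyEq (Filter.Eventually.of_forall fun r => ?_)
      simp only [Pi.mul_apply]
      ring
    exact hsum.const_mul (1/2 : ℝ)
  have HF := (H1.add H2).add H3
  have hT : ((1/2 : ℝ) • ((s p - tb) • L + (s p - tb) • L)
      + (1/2 : ℝ) • ((p.1 - vb) • ContinuousLinearMap.fst ℝ ℝ (Fin n → ℝ)
        + (p.1 - vb) • ContinuousLinearMap.fst ℝ ℝ (Fin n → ℝ))
      + (1/2 : ℝ) • (∑ i, ((p.2 i - xb i) • Pr i + (p.2 i - xb i) • Pr i))) = 0 := by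
    rw [← HF.fderiv]
    exact hstat
  have hstat' : (s p - tb) * L (q - p) + (p.1 - vb) * (q.1 - p.1)
      + ∑ i, (p.2 i - xb i) * (q.2 i - p.2 i) = 0 := by
    have := congrArg (fun (T : (ℝ × (Fin n → ℝ)) →L[ℝ] ℝ) => T (q - p)) hT
    simp only [ContinuousLinearMap.add_apply, ContinuousLinearMap.smul_apply,
      ContinuousLinearMap.sum_apply, ContinuousLinearMap.coe_fst',
      ContinuousLinearMap.zero_apply, hPr, ContinuousLinearMap.coe_comp',
      Function.comp_apply, ContinuousLinearMap.coe_snd',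
      ContinuousLinearMap.proj_apply, smul_eq_mul, Prod.fst_sub, Prod.snd_sub,
      Pi.sub_apply] at this
    rw [Finset.sum_add_distrib] at this
    linarith [this]
  -- algebra
  have hsum_le : ∑ i, (p.2 i - xb i)^2 + 2 * ∑ i, (p.2 i - xb i) * (q.2 i - p.2 i)
      ≤ ∑ i, (q.2 i - xb i)^2 := by
    have h := Finset.sum_le_sum (f := fun i => (p.2 i - xb i)^2 + 2*((p.2 i - xb i)*(q.2 i - p.2 i)))
      (g := fun i => (q.2 i - xb i)^2) (s := Finset.univ)
      (fun i _ => by nlinarith [sq_nonneg (q.2 i - p.2 i)])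
    simpa [Finset.sum_add_distrib, Finset.mul_sum] using h
  have hlam : (0:ℝ) ≤ s p - tb := le_of_lt (sub_pos.2 hgt)
  have hm1 : (s p - tb) * L (q - p) ≤ (s p - tb) * (s q - s p) :=
    mul_le_mul_of_nonneg_left hgrad hlam
  have hm2 : (s p - tb) * (s q - s p) ≤ (s p - tb) * (t - s p) :=
    mul_le_mul_of_nonneg_left (by linarith) hlam
  have hid1 : (1/2:ℝ)*(t-tb)^2
      = (1/2)*(s p - tb)^2 + (s p - tb)*(t - s p) + (1/2)*(t - s p)^2 := by ring
  have hid2 : (1/2:ℝ)*(q.1-vb)^2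
      = (1/2)*(p.1-vb)^2 + (p.1-vb)*(q.1-p.1) + (1/2)*(q.1-p.1)^2 := by ring
  have h1 := sq_nonneg (t - s p)
  have h2 := sq_nonneg (q.1 - p.1)
  linarith [hsum_le, hstat']
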